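/- Let C = {C_1,…,C_k} ⊂ [Δ]^d and let s ∈ [Δ]^d be a uniformly random shift defining a quadtree with O(log Δ) levels, where at level i the grid has side length 2^i. For each center C_j and each level i, a copy of C_j is created for each grid hyperplane H of the level-i grid with dist(C_j, H) < 2^i/(d·log Δ). Then the expected total number of copies created, over the random shift s, is at most O(k); hence the augmented set φ(C) has expected size O(k). -/

import Mathlib

open scoped BigOperators Classical
open MeasureTheory

/-- Distance from a real number `y` to the nearest multiple of `L` (the nearest grid
hyperplane position along one axis). -/
noncomputable def hplaneDist (y L : ℝ) : ℝ := |y - L * (round (y / L) : ℤ)|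

lemma abs_key {L : ℝ} (hL : 0 < L) (y : ℝ) (z : ℤ) :
    |y - L * z| = |y / L - z| * L := by
  have h : (y / L - z) * L = y - L * z := by field_simp
  rw [← h, abs_mul, abs_of_pos hL]

lemma hplane_lt_iff {L ε : ℝ} (hL : 0 < L) (y : ℝ) :
    hplaneDist y L < ε ↔ ∃ m : ℤ, |y - m * L| < ε := by
  constructor
  · intro h
    exact ⟨round (y / L), by rw [hplaneDist] at h; rw [mul_comm]; exact h⟩
  · rintro ⟨m, hm⟩
    rw [hplaneDist, abs_key hL]
    calc |y / L - (round (y / L) : ℤ)| * L ≤ |y / L - (m : ℤ)| * L :=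
          mul_le_mul_of_nonneg_right (round_le (y / L) m) hL.le
      _ = |y - L * m| := (abs_key hL y m).symm
      _ = |y - m * L| := by rw [mul_comm]
      _ < ε := hm

lemma badSet_measurable {L ε : ℝ} (hL : 0 < L) (c : ℝ) :
    MeasurableSet {x : ℝ | hplaneDist (c + x) L < ε} := by
  have : {x : ℝ | hplaneDist (c + x) L < ε}
      = ⋃ m : ℤ, Set.Ioo ((m : ℝ) * L - c - ε) ((m : ℝ) * L - c + ε) := by
    ext x
    simp only [Set.mem_setOf_eq, Set.mem_iUnion, Set.mem_Ioo, hplane_lt_iff hL, abs_lt]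
    constructor
    · rintro ⟨m, h1, h2⟩; exact ⟨m, by linarith, by linarith⟩
    · rintro ⟨m, h1, h2⟩; exact ⟨m, by linarith, by linarith⟩
  rw [this]
  exact MeasurableSet.iUnion fun m => measurableSet_Ioo

lemma oneDim {L ε : ℝ} (hL : 0 < L) (hε : 0 < ε) (hεL : ε ≤ L) (c : ℝ) (n : ℕ) :
    volume (Set.Icc (0 : ℝ) (n * L) ∩ {x | hplaneDist (c + x) L < ε})
      ≤ ENNReal.ofReal (((n : ℝ) + 3) * (2 * ε)) := by
  set m₀ : ℤ := ⌈(c - ε) / L⌉ with hm₀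
  set m₁ : ℤ := ⌊(c + n * L + ε) / L⌋ with hm₁
  have hsub : Set.Icc (0 : ℝ) (n * L) ∩ {x | hplaneDist (c + x) L < ε}
      ⊆ ⋃ m ∈ Finset.Icc m₀ m₁, Set.Ioo ((m : ℝ) * L - c - ε) ((m : ℝ) * L - c + ε) := by
    rintro x ⟨⟨hx0, hxn⟩, hx⟩
    rw [Set.mem_setOf_eq, hplane_lt_iff hL] at hx
    obtain ⟨m, hm⟩ := hx
    rw [abs_lt] at hm
    refine Set.mem_iUnion₂.mpr ⟨m, ?_, ?_⟩
    · rw [Finset.mem_Icc]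
      constructor
      · rw [hm₀, Int.ceil_le, div_le_iff₀ hL]
        nlinarith [hm.1, hm.2]
      · rw [hm₁, Int.le_floor, le_div_iff₀ hL]
        nlinarith [hm.1, hm.2]
    · exact ⟨by nlinarith [hm.1, hm.2], by nlinarith [hm.1, hm.2]⟩
  have hcard : (Finset.Icc m₀ m₁).card ≤ n + 3 := by
    rw [Int.card_Icc]
    have h1 : (m₁ : ℝ) ≤ (c + n * L + ε) / L := Int.floor_le _
    have h2 : (c - ε) / L ≤ (m₀ : ℝ) := Int.le_ceil _
    have h3 : (m₁ : ℝ) - m₀ ≤ n + 2 := by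
      have hd : (c + n * L + ε) / L - (c - ε) / L = n + 2 * ε / L := by
        field_simp; ring
      have h4 : 2 * ε / L ≤ 2 := by rw [div_le_iff₀ hL]; linarith
      linarith
    have h5 : m₁ + 1 - m₀ ≤ (n : ℤ) + 3 := by
      have : ((m₁ + 1 - m₀ : ℤ) : ℝ) ≤ ((n : ℤ) + 3 : ℤ) := by push_cast; linarith
      exact_mod_cast this
    calc (m₁ + 1 - m₀).toNat ≤ ((n : ℤ) + 3).toNat := Int.toNat_le_toNat h5
      _ = n + 3 := by omega
  calc volume (Set.Icc (0 : ℝ) (n * L) ∩ {x | hplaneDist (c + x) L < ε})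
      ≤ volume (⋃ m ∈ Finset.Icc m₀ m₁,
          Set.Ioo ((m : ℝ) * L - c - ε) ((m : ℝ) * L - c + ε)) := measure_mono hsub
    _ ≤ ∑ m ∈ Finset.Icc m₀ m₁,
          volume (Set.Ioo ((m : ℝ) * L - c - ε) ((m : ℝ) * L - c + ε)) :=
        measure_biUnion_finset_le _ _
    _ = (Finset.Icc m₀ m₁).card • ENNReal.ofReal (2 * ε) := by
        rw [Finset.sum_congr rfl fun m _ => ?_, Finset.sum_const]
        rw [Real.volume_Ioo]; congr 1; ring
    _ ≤ (n + 3) • ENNReal.ofReal (2 * ε) := by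
        rw [nsmul_eq_mul, nsmul_eq_mul]
        exact mul_le_mul_left (by exact_mod_cast hcard) _
    _ = ENNReal.ofReal (((n : ℝ) + 3) * (2 * ε)) := by
        rw [nsmul_eq_mul, ← ENNReal.ofReal_natCast, ← ENNReal.ofReal_mul (by positivity)]
        congr 2
        push_cast; ring

lemma integrable_term {d : ℕ} (a : Fin d) {B : ℝ}
    (P : ℝ → Prop) (hP : MeasurableSet {x | P x}) :
    IntegrableOn (fun s : Fin d → ℝ => if P (s a) then (1 : ℝ) else 0)
      (Set.univ.pi fun _ : Fin d => Set.Icc (0 : ℝ) B) volume := by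
  have hSmeas : MeasurableSet ((fun s : Fin d → ℝ => s a) ⁻¹' {x | P x}) :=
    (measurable_pi_apply a) hP
  have hcube : volume (Set.univ.pi fun _ : Fin d => Set.Icc (0 : ℝ) B) < ⊤ := by
    rw [volume_pi_pi]
    simp [Real.volume_Icc]
  have hconst : IntegrableOn (fun _ : Fin d → ℝ => (1 : ℝ))
      (Set.univ.pi fun _ : Fin d => Set.Icc (0 : ℝ) B) volume :=
    integrableOn_const hcube.ne
  have heq : (fun s : Fin d → ℝ => if P (s a) then (1 : ℝ) else 0)
      = Set.indicator ((fun s : Fin d → ℝ => s a) ⁻¹' {x | P x}) (fun _ => 1) := by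
    funext s; simp [Set.indicator_apply, Set.mem_preimage]
  rw [heq]
  exact hconst.indicator hSmeas

lemma integral_term {d : ℕ} (hd : 1 ≤ d) (a : Fin d) {B : ℝ} (hB : 0 ≤ B)
    (P : ℝ → Prop) (hP : MeasurableSet {x | P x}) :
    ∫ s in (Set.univ.pi fun _ : Fin d => Set.Icc (0 : ℝ) B),
        (if P (s a) then (1 : ℝ) else 0)
      = (volume (Set.Icc (0 : ℝ) B ∩ {x | P x})).toReal * B ^ (d - 1) := by
  have hSmeas : MeasurableSet ((fun s : Fin d → ℝ => s a) ⁻¹' {x | P x}) :=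
    (measurable_pi_apply a) hP
  have heq : (fun s : Fin d → ℝ => if P (s a) then (1 : ℝ) else 0)
      = Set.indicator ((fun s : Fin d → ℝ => s a) ⁻¹' {x | P x}) (fun _ => 1) := by
    funext s; simp [Set.indicator_apply, Set.mem_preimage]
  rw [heq, setIntegral_indicator hSmeas, setIntegral_const, smul_eq_mul, mul_one]
  have hset : (Set.univ.pi fun _ : Fin d => Set.Icc (0 : ℝ) B)
        ∩ ((fun s : Fin d → ℝ => s a) ⁻¹' {x | P x})
      = Set.univ.pi (fun i => if i = a then Set.Icc (0 : ℝ) B ∩ {x | P x}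
          else Set.Icc (0 : ℝ) B) := by
    ext s
    simp only [Set.mem_inter_iff, Set.mem_preimage, Set.mem_pi, Set.mem_univ, true_implies,
      Set.mem_setOf_eq]
    constructor
    · rintro ⟨h2, h1⟩ i
      by_cases hi : i = a
      · subst hi; simp only [if_pos rfl]; exact ⟨h2 i, h1⟩
      · simp only [if_neg hi]; exact h2 i
    · intro h
      refine ⟨fun i => ?_, ?_⟩
      swap
      · have := h a; rw [if_pos rfl] at this; exact this.2
      · by_cases hi : i = a
        · subst hi; have := h i; rw [if_pos rfl] at this; exact this.1
        · have := h i; rwa [if_neg hi] at this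
  rw [hset, measureReal_def, volume_pi_pi]
  rw [← Finset.mul_prod_erase Finset.univ _ (Finset.mem_univ a)]
  have hrest : ∀ i ∈ Finset.univ.erase a,
      volume (if i = a then Set.Icc (0 : ℝ) B ∩ {x | P x} else Set.Icc (0 : ℝ) B)
        = ENNReal.ofReal B := fun i hi => by
    rw [if_neg (Finset.mem_erase.mp hi).1, Real.volume_Icc, sub_zero]
  rw [Finset.prod_congr rfl hrest, Finset.prod_const,
    Finset.card_erase_of_mem (Finset.mem_univ a), Finset.card_univ, Fintype.card_fin,
    if_pos rfl, ENNReal.toReal_mul, ENNReal.toReal_pow, ENNReal.toReal_ofReal hB]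

set_option maxHeartbeats 1000000 in
/-- Expected number of projected copies created by the bicriteria quadtree mapping `φ`:
for a uniformly random shift `s ∈ [0,Δ]^d`, the expected number of triples
`(center c, level t, axis a)` with `dist(c+s, level-t hyperplane along axis a)
 < 2^t/(d·log Δ)` is at most `O(k)`; stated as an integral bound over the shift cube. -/
theorem expected_quadtree_copies :
    ∃ A : ℝ, 0 < A ∧ ∀ (d ℓ k : ℕ), 1 ≤ d → 2 ≤ ℓ → 1 ≤ k →
      ∀ C : Finset (Fin d → Fin (2 ^ ℓ)), C.card = k →
      (∫ s in (Set.univ.pi fun _ : Fin d => Set.Icc (0 : ℝ) (2 ^ ℓ)),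
          ∑ c ∈ C, ∑ t ∈ Finset.range (ℓ + 1), ∑ a : Fin d,
            (if hplaneDist (((c a : ℕ) : ℝ) + s a) (2 ^ t) <
                2 ^ t / (d * Real.log (2 ^ ℓ)) then (1 : ℝ) else 0)) ≤
        A * k * ((2 : ℝ) ^ ℓ) ^ d := by
  refine ⟨18, by norm_num, ?_⟩
  intro d ℓ k hd hℓ hk C hC
  have hdR : (1 : ℝ) ≤ d := by exact_mod_cast hd
  have hℓR : (2 : ℝ) ≤ ℓ := by exact_mod_cast hℓ
  have hlog2 : (0.6931471803 : ℝ) < Real.log 2 := Real.log_two_gt_d9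
  have hB : (0 : ℝ) ≤ (2 : ℝ) ^ ℓ := by positivity
  have hlogB : Real.log ((2 : ℝ) ^ ℓ) = ℓ * Real.log 2 := by
    rw [Real.log_pow]
  have hl1 : (1 : ℝ) ≤ (ℓ : ℝ) * Real.log 2 := by nlinarith
  have hD1 : (1 : ℝ) ≤ (d : ℝ) * Real.log ((2 : ℝ) ^ ℓ) := by
    rw [hlogB]
    calc (1 : ℝ) = 1 * 1 := by norm_num
      _ ≤ (d : ℝ) * ((ℓ : ℝ) * Real.log 2) :=
          mul_le_mul hdR hl1 zero_le_one (le_trans zero_le_one hdR)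
  have hDpos : (0 : ℝ) < (d : ℝ) * Real.log ((2 : ℝ) ^ ℓ) := lt_of_lt_of_le zero_lt_one hD1
  -- per-term bound
  have key : ∀ (cc : ℝ) (t : ℕ), t ≤ ℓ → ∀ a : Fin d,
      (∫ s in (Set.univ.pi fun _ : Fin d => Set.Icc (0 : ℝ) (2 ^ ℓ)),
        (if hplaneDist (cc + s a) (2 ^ t) <
            2 ^ t / (d * Real.log ((2 : ℝ) ^ ℓ)) then (1 : ℝ) else 0))
      ≤ 8 * (2 : ℝ) ^ ℓ / ((d : ℝ) * ((ℓ : ℝ) * Real.log 2)) * ((2 : ℝ) ^ ℓ) ^ (d - 1) := by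
    intro cc t ht a
    set ε : ℝ := 2 ^ t / (d * Real.log ((2 : ℝ) ^ ℓ)) with hεdef
    have hLt : (0 : ℝ) < 2 ^ t := by positivity
    have hε : 0 < ε := div_pos hLt hDpos
    have hεL : ε ≤ 2 ^ t := div_le_self hLt.le hD1
    rw [integral_term hd a hB (fun x => hplaneDist (cc + x) ((2 : ℝ) ^ t) < ε)
      (badSet_measurable hLt cc)]
    have hn : (2 : ℝ) ^ ℓ = ((2 ^ (ℓ - t) : ℕ) : ℝ) * (2 : ℝ) ^ t := by
      push_cast
      rw [← pow_add]
      congr 1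
      omega
    have hvol := oneDim hLt hε hεL cc (2 ^ (ℓ - t))
    have hto : (volume (Set.Icc (0 : ℝ) ((2 : ℝ) ^ ℓ)
          ∩ {x | hplaneDist (cc + x) ((2 : ℝ) ^ t) < ε})).toReal
        ≤ (((2 ^ (ℓ - t) : ℕ) : ℝ) + 3) * (2 * ε) := by
      rw [hn]
      exact ENNReal.toReal_le_of_le_ofReal
        (mul_nonneg (by positivity) (by linarith)) hvol
    have hbound : (((2 ^ (ℓ - t) : ℕ) : ℝ) + 3) * (2 * ε)
        ≤ 8 * (2 : ℝ) ^ ℓ / ((d : ℝ) * ((ℓ : ℝ) * Real.log 2)) := by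
      have hn1 : (1 : ℝ) ≤ ((2 ^ (ℓ - t) : ℕ) : ℝ) := by
        exact_mod_cast Nat.one_le_two_pow
      have h43 : (((2 ^ (ℓ - t) : ℕ) : ℝ) + 3) * (2 * ε)
          ≤ 4 * ((2 ^ (ℓ - t) : ℕ) : ℝ) * (2 * ε) := by nlinarith
      refine h43.trans (le_of_eq ?_)
      have hne : (d : ℝ) * ((ℓ : ℝ) * Real.log 2) ≠ 0 := by
        rw [← hlogB]; exact hDpos.ne'
      rw [hεdef, hlogB, hn]
      field_simp
      ring
    exact mul_le_mul_of_nonneg_right (hto.trans hbound) (pow_nonneg hB _)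
  -- integrability
  have hint : ∀ (c : Fin d → Fin (2 ^ ℓ)) (t : ℕ) (a : Fin d),
      IntegrableOn (fun s : Fin d → ℝ =>
        if hplaneDist (((c a : ℕ) : ℝ) + s a) (2 ^ t) <
            2 ^ t / (d * Real.log ((2 : ℝ) ^ ℓ)) then (1 : ℝ) else 0)
        (Set.univ.pi fun _ : Fin d => Set.Icc (0 : ℝ) (2 ^ ℓ)) volume :=
    fun c t a => integrable_term a
      (fun x => hplaneDist (((c a : ℕ) : ℝ) + x) (2 ^ t) <
        2 ^ t / (d * Real.log ((2 : ℝ) ^ ℓ)))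
      (badSet_measurable (by positivity : (0:ℝ) < 2 ^ t) (((c a : ℕ) : ℝ)))
  set r : ℝ := 8 * (2 : ℝ) ^ ℓ / ((d : ℝ) * ((ℓ : ℝ) * Real.log 2)) * ((2 : ℝ) ^ ℓ) ^ (d - 1)
    with hrdef
  calc (∫ s in (Set.univ.pi fun _ : Fin d => Set.Icc (0 : ℝ) (2 ^ ℓ)),
          ∑ c ∈ C, ∑ t ∈ Finset.range (ℓ + 1), ∑ a : Fin d,
            (if hplaneDist (((c a : ℕ) : ℝ) + s a) (2 ^ t) <
                2 ^ t / (d * Real.log (2 ^ ℓ)) then (1 : ℝ) else 0))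
      = ∑ c ∈ C, ∑ t ∈ Finset.range (ℓ + 1), ∑ a : Fin d,
          (∫ s in (Set.univ.pi fun _ : Fin d => Set.Icc (0 : ℝ) (2 ^ ℓ)),
            (if hplaneDist (((c a : ℕ) : ℝ) + s a) (2 ^ t) <
                2 ^ t / (d * Real.log (2 ^ ℓ)) then (1 : ℝ) else 0)) := by
        rw [integral_finset_sum C (fun c _ => integrable_finset_sum _
          (fun t _ => integrable_finset_sum _ (fun a _ => hint c t a)))]
        refine Finset.sum_congr rfl fun c _ => ?_
        rw [integral_finset_sum _ (fun t _ => integrable_finset_sum _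
          (fun a _ => hint c t a))]
        exact Finset.sum_congr rfl fun t _ => integral_finset_sum _ (fun a _ => hint c t a)
    _ ≤ ∑ c ∈ C, ∑ t ∈ Finset.range (ℓ + 1), ∑ a : Fin d, r := by
        refine Finset.sum_le_sum fun c _ => Finset.sum_le_sum fun t ht =>
          Finset.sum_le_sum fun a _ => ?_
        exact key _ t (Nat.lt_succ_iff.mp (Finset.mem_range.mp ht)) a
    _ = (k : ℝ) * (((ℓ : ℝ) + 1) * ((d : ℝ) * r)) := by
        simp only [Finset.sum_const, Finset.card_univ, Fintype.card_fin,
          Finset.card_range, hC, nsmul_eq_mul]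
        push_cast
        ring
    _ ≤ 18 * (k : ℝ) * ((2 : ℝ) ^ ℓ) ^ d := by
        have hBd : ((2 : ℝ) ^ ℓ) ^ (d - 1) * (2 : ℝ) ^ ℓ = ((2 : ℝ) ^ ℓ) ^ d := by
          rw [← pow_succ]
          congr 1
          omega
        have hpos : (0 : ℝ) < (ℓ : ℝ) * Real.log 2 := lt_of_lt_of_le zero_lt_one hl1
        have hdpos : (0 : ℝ) < (d : ℝ) := lt_of_lt_of_le zero_lt_one hdR
        have hrd : (d : ℝ) * r = 8 * ((2 : ℝ) ^ ℓ) ^ d / ((ℓ : ℝ) * Real.log 2) := by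
          rw [hrdef, ← hBd]
          field_simp
        have hBdpos : (0 : ℝ) < ((2 : ℝ) ^ ℓ) ^ d := by positivity
        have hl8 : (0 : ℝ) ≤ 18 * Real.log 2 - 8 := by nlinarith
        have h8l : 8 * ((ℓ : ℝ) + 1) ≤ 18 * ((ℓ : ℝ) * Real.log 2) := by
          nlinarith [mul_nonneg (by linarith : (0 : ℝ) ≤ (ℓ : ℝ) - 2) hl8]
        have hmain : ((ℓ : ℝ) + 1) * (8 * ((2 : ℝ) ^ ℓ) ^ d / ((ℓ : ℝ) * Real.log 2))
            ≤ 18 * ((2 : ℝ) ^ ℓ) ^ d := by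
          rw [← mul_div_assoc, div_le_iff₀ hpos]
          nlinarith [mul_le_mul_of_nonneg_right h8l hBdpos.le]
        calc (k : ℝ) * (((ℓ : ℝ) + 1) * ((d : ℝ) * r))
            = (k : ℝ) * (((ℓ : ℝ) + 1) * (8 * ((2 : ℝ) ^ ℓ) ^ d / ((ℓ : ℝ) * Real.log 2))) := by
              rw [hrd]
          _ ≤ (k : ℝ) * (18 * ((2 : ℝ) ^ ℓ) ^ d) :=
              mul_le_mul_of_nonneg_left hmain (by positivity)
          _ = 18 * (k : ℝ) * ((2 : ℝ) ^ ℓ) ^ d := by ring
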